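/- Let p be prime and let j be an integer not divisible by p. If k is chosen uniformly at random from {1, …, p−1}, then the probability that the fractional part of jk/p lies in [1/8, 3/8] ∪ [5/8, 7/8] is at least (p−1)/2 / (p−1) − 2/(p−1); in particular for p ≥ 9, with probability at least 1/4, cos²(2πjk/p) ≤ 1/2. -/

import Mathlib

open Real Finset

private lemma fract_int_div (a : ℤ) (p : ℕ) (hp : 0 < p) :
    Int.fract ((a : ℝ) / p) = ((a % (p : ℤ) : ℤ) : ℝ) / p := by
  have hp' : (0:ℝ) < p := by exact_mod_cast hp
  have hkey : (a : ℝ) / p = ((a / (p:ℤ) : ℤ) : ℝ) + ((a % (p:ℤ) : ℤ) : ℝ) / p := by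
    have h := Int.mul_ediv_add_emod a (p:ℤ)
    have h' : (a : ℝ) = (p:ℝ) * ((a / (p:ℤ) : ℤ) : ℝ) + ((a % (p:ℤ) : ℤ) : ℝ) := by
      exact_mod_cast congrArg (fun z : ℤ => (z : ℝ)) h.symm
    field_simp
    linarith
  rw [hkey, Int.fract_intCast_add, Int.fract_eq_self.mpr ?_]
  constructor
  · have : (0:ℤ) ≤ a % (p:ℤ) := Int.emod_nonneg a (by exact_mod_cast hp.ne')
    positivity
  · rw [div_lt_one hp']
    exact_mod_cast Int.emod_lt_of_pos a (by exact_mod_cast hp)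

private lemma cos_sq_le_half {t : ℝ} (h1 : 1/8 ≤ t) (h2 : t ≤ 3/8) :
    Real.cos (2*π*t)^2 ≤ 1/2 := by
  have hpi := Real.pi_pos
  have hub : Real.cos (2*π*t) ≤ √2/2 := by
    rw [← Real.cos_pi_div_four]
    apply Real.cos_le_cos_of_nonneg_of_le_pi
    · positivity
    · nlinarith
    · nlinarith
  have hlb : -(√2/2) ≤ Real.cos (2*π*t) := by
    have h34 : Real.cos (π - π/4) = -(√2/2) := by
      rw [Real.cos_pi_sub, Real.cos_pi_div_four]
    rw [← h34]
    apply Real.cos_le_cos_of_nonneg_of_le_pi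
    · nlinarith
    · nlinarith
    · nlinarith
  have hsq : (√2/2)^2 = 1/2 := by
    rw [div_pow, Real.sq_sqrt (by norm_num : (0:ℝ) ≤ 2)]
    norm_num
  calc Real.cos (2*π*t)^2 ≤ (√2/2)^2 := sq_le_sq' hlb hub
    _ = 1/2 := hsq

private lemma cos_sq_le_half' {y : ℝ}
    (h : Int.fract y ∈ Set.Icc (1/8 : ℝ) (3/8) ∪ Set.Icc (5/8 : ℝ) (7/8)) :
    Real.cos (2*π*y)^2 ≤ 1/2 := by
  have h1 : Real.cos (2*π*y) = Real.cos (2*π*Int.fract y) := by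
    have heq : 2*π*y = 2*π*Int.fract y + (⌊y⌋ : ℝ)*(2*π) := by
      have h := Int.fract_add_floor y
      linear_combination 2*π*h.symm
    rw [heq, Real.cos_add_int_mul_two_pi]
  rw [h1]
  rcases h with ⟨ha, hb⟩ | ⟨ha, hb⟩
  · exact cos_sq_le_half ha hb
  · rw [← Real.cos_two_pi_sub]
    have heq : 2*π - 2*π*Int.fract y = 2*π*(1 - Int.fract y) := by ring
    rw [heq]
    exact cos_sq_le_half (by linarith) (by linarith)

private lemma residue_count (p : ℕ) (hp : 2 ≤ p) :
    p ≤ 2 * ((Finset.Icc 1 (p-1)).filter (fun r : ℕ =>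
        (r:ℝ)/p ∈ Set.Icc (1/8 : ℝ) (3/8) ∪ Set.Icc (5/8 : ℝ) (7/8))).card + 5 := by
  classical
  have hp0 : (0:ℝ) < p := by positivity
  have hsub : Finset.Icc ((p+7)/8) (3*p/8) ∪ Finset.Icc ((5*p+7)/8) (7*p/8) ⊆
      (Finset.Icc 1 (p-1)).filter (fun r : ℕ =>
        (r:ℝ)/p ∈ Set.Icc (1/8 : ℝ) (3/8) ∪ Set.Icc (5/8 : ℝ) (7/8)) := by
    intro r hr
    rw [Finset.mem_union, Finset.mem_Icc, Finset.mem_Icc] at hr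
    rw [Finset.mem_filter, Finset.mem_Icc]
    have hd1 := Nat.div_add_mod (p+7) 8
    have hd2 := Nat.div_add_mod (3*p) 8
    have hd3 := Nat.div_add_mod (5*p+7) 8
    have hd4 := Nat.div_add_mod (7*p) 8
    have hm1 := Nat.mod_lt (p+7) (show 0 < 8 by norm_num)
    have hm2 := Nat.mod_lt (3*p) (show 0 < 8 by norm_num)
    have hm3 := Nat.mod_lt (5*p+7) (show 0 < 8 by norm_num)
    have hm4 := Nat.mod_lt (7*p) (show 0 < 8 by norm_num)
    rcases hr with ⟨ha, hb⟩ | ⟨ha, hb⟩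
    · have hlo : p ≤ 8*r := by omega
      have hhi : 8*r ≤ 3*p := by omega
      have hlo' : (p:ℝ) ≤ 8*r := by exact_mod_cast hlo
      have hhi' : (8*r:ℝ) ≤ 3*p := by exact_mod_cast hhi
      refine ⟨⟨by omega, by omega⟩, Or.inl ⟨?_, ?_⟩⟩
      · rw [le_div_iff₀ hp0]; linarith
      · rw [div_le_iff₀ hp0]; linarith
    · have hlo : 5*p ≤ 8*r := by omega
      have hhi : 8*r ≤ 7*p := by omega
      have hlo' : (5*(p:ℝ)) ≤ 8*r := by exact_mod_cast hlo
      have hhi' : (8*r:ℝ) ≤ 7*p := by exact_mod_cast hhi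
      refine ⟨⟨by omega, by omega⟩, Or.inr ⟨?_, ?_⟩⟩
      · rw [le_div_iff₀ hp0]; linarith
      · rw [div_le_iff₀ hp0]; linarith
  have hdisj : Disjoint (Finset.Icc ((p+7)/8) (3*p/8)) (Finset.Icc ((5*p+7)/8) (7*p/8)) := by
    rw [Finset.disjoint_left]
    intro r hr hr'
    rw [Finset.mem_Icc] at hr hr'
    have hd2 := Nat.div_add_mod (3*p) 8
    have hd3 := Nat.div_add_mod (5*p+7) 8
    have hm2 := Nat.mod_lt (3*p) (show 0 < 8 by norm_num)
    have hm3 := Nat.mod_lt (5*p+7) (show 0 < 8 by norm_num)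
    omega
  have hcard := Finset.card_le_card hsub
  rw [Finset.card_union_of_disjoint hdisj, Nat.card_Icc, Nat.card_Icc] at hcard
  have hd1 := Nat.div_add_mod (p+7) 8
  have hd2 := Nat.div_add_mod (3*p) 8
  have hd3 := Nat.div_add_mod (5*p+7) 8
  have hd4 := Nat.div_add_mod (7*p) 8
  have hm1 := Nat.mod_lt (p+7) (show 0 < 8 by norm_num)
  have hm2 := Nat.mod_lt (3*p) (show 0 < 8 by norm_num)
  have hm3 := Nat.mod_lt (5*p+7) (show 0 < 8 by norm_num)
  have hm4 := Nat.mod_lt (7*p) (show 0 < 8 by norm_num)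
  omega

theorem stmt_3 (p : ℕ) (hp : p.Prime) (j : ℤ) (hj : ¬ (p : ℤ) ∣ j) :
    (((Finset.Icc 1 (p - 1)).filter (fun k : ℕ =>
        Int.fract ((j * k : ℝ) / p) ∈
          Set.Icc (1/8 : ℝ) (3/8) ∪ Set.Icc (5/8 : ℝ) (7/8))).card : ℝ) / (p - 1)
      ≥ ((p - 1 : ℝ) / 2) / (p - 1) - 2 / (p - 1) ∧
    (9 ≤ p →
      (((Finset.Icc 1 (p - 1)).filter (fun k : ℕ =>
          Real.cos (2 * π * j * k / p) ^ 2 ≤ 1/2)).card : ℝ) / (p - 1) ≥ 1/4) := by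
  classical
  have hp2 : 2 ≤ p := hp.two_le
  have hp0 : (0:ℝ) < p := by positivity
  have hpz : (p:ℤ) ≠ 0 := by exact_mod_cast (by omega : p ≠ 0)
  have hpI : Prime (p:ℤ) := Nat.prime_iff_prime_int.mp hp
  set f : ℕ → ℕ := fun k => ((j * k) % (p:ℤ)).toNat with hf
  -- key facts about f
  have hndvd : ∀ k ∈ Finset.Icc 1 (p-1), ¬ (p:ℤ) ∣ j * (k:ℤ) := by
    intro k hk hdvd
    rw [Finset.mem_Icc] at hk
    rcases hpI.dvd_mul.mp hdvd with h | h
    · exact hj h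
    · have hk0 : (0:ℤ) < k := by exact_mod_cast (by omega : 0 < k)
      have h1 := Int.le_of_dvd hk0 h
      have h2 : (k:ℤ) < (p:ℤ) := by exact_mod_cast (by omega : k < p)
      omega
  have hfmem : ∀ k ∈ Finset.Icc 1 (p-1), f k ∈ Finset.Icc 1 (p-1) := by
    intro k hk
    have h1 : (0:ℤ) ≤ (j * k) % (p:ℤ) := Int.emod_nonneg _ hpz
    have h2 : (j * k) % (p:ℤ) < p := Int.emod_lt_of_pos _ (by exact_mod_cast (by omega : 0 < p))
    have h3 : (j * k) % (p:ℤ) ≠ 0 := by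
      intro h0
      exact hndvd k hk (Int.dvd_of_emod_eq_zero h0)
    rw [Finset.mem_Icc]
    simp only [hf]
    omega
  have hfinj : Set.InjOn f (Finset.Icc 1 (p-1)) := by
    intro a ha b hb hab
    rw [Finset.coe_Icc, Set.mem_Icc] at ha hb
    have h1a : (0:ℤ) ≤ (j * a) % (p:ℤ) := Int.emod_nonneg _ hpz
    have h1b : (0:ℤ) ≤ (j * b) % (p:ℤ) := Int.emod_nonneg _ hpz
    have heq : (j * a) % (p:ℤ) = (j * b) % (p:ℤ) := by
      have := congrArg (fun n : ℕ => (n : ℤ)) hab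
      simpa [hf, Int.toNat_of_nonneg h1a, Int.toNat_of_nonneg h1b] using this
    have hdvd : (p:ℤ) ∣ j * a - j * b :=
      Int.dvd_of_emod_eq_zero (Int.emod_emod_of_dvd _ dvd_rfl ▸
        Int.emod_eq_emod_iff_emod_sub_eq_zero.mp heq)
    have hdvd' : (p:ℤ) ∣ j * ((a:ℤ) - (b:ℤ)) := by
      have : j * a - j * b = j * ((a:ℤ) - (b:ℤ)) := by ring
      rwa [this] at hdvd
    have hdvd'' : (p:ℤ) ∣ ((a:ℤ) - (b:ℤ)) := (hpI.dvd_mul.mp hdvd').resolve_left hj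
    have haZ : (a:ℤ) < p := by exact_mod_cast (by omega : a < p)
    have hbZ : (b:ℤ) < p := by exact_mod_cast (by omega : b < p)
    have ha0 : (0:ℤ) ≤ a := Int.natCast_nonneg a
    have hb0 : (0:ℤ) ≤ b := Int.natCast_nonneg b
    have habs : |(a:ℤ) - (b:ℤ)| < p := by
      rw [abs_lt]
      omega
    have := Int.eq_zero_of_abs_lt_dvd hdvd'' habs
    omega
  have himg : (Finset.Icc 1 (p-1)).image f = Finset.Icc 1 (p-1) := by
    apply Finset.eq_of_subset_of_card_le
    · intro r hr
      rw [Finset.mem_image] at hr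
      obtain ⟨k, hk, rfl⟩ := hr
      exact hfmem k hk
    · rw [Finset.card_image_of_injOn hfinj]
  have hfract : ∀ k ∈ Finset.Icc 1 (p-1),
      Int.fract ((j * k : ℝ) / p) = ((f k : ℕ) : ℝ) / p := by
    intro k hk
    have hcast : ((j:ℝ) * k) = (((j * (k:ℤ)) : ℤ) : ℝ) := by push_cast; ring
    rw [hcast, fract_int_div _ p (by omega)]
    have h1 : (0:ℤ) ≤ (j * (k:ℤ)) % (p:ℤ) := Int.emod_nonneg _ hpz
    have h2 : ((f k : ℕ) : ℤ) = (j * (k:ℤ)) % (p:ℤ) := by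
      simp only [hf]; exact Int.toNat_of_nonneg h1
    have h3 : ((f k : ℕ) : ℝ) = (((j * (k:ℤ)) % (p:ℤ) : ℤ) : ℝ) := by
      exact_mod_cast congrArg (fun z : ℤ => (z:ℝ)) h2
    rw [h3]
  -- card of the fract filter equals card of the residue filter
  have hcardeq : ((Finset.Icc 1 (p-1)).filter (fun k : ℕ =>
        Int.fract ((j * k : ℝ) / p) ∈
          Set.Icc (1/8 : ℝ) (3/8) ∪ Set.Icc (5/8 : ℝ) (7/8))).card
      = ((Finset.Icc 1 (p-1)).filter (fun r : ℕ =>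
        (r:ℝ)/p ∈ Set.Icc (1/8 : ℝ) (3/8) ∪ Set.Icc (5/8 : ℝ) (7/8))).card := by
    conv_rhs => rw [← himg]
    rw [Finset.filter_image, Finset.card_image_of_injOn
      (hfinj.mono (Finset.filter_subset _ _))]
    apply Finset.card_nbij id
    · intro k hk
      rw [Finset.mem_coe, Finset.mem_filter] at hk ⊢
      exact ⟨hk.1, (hfract k hk.1) ▸ hk.2⟩
    · intro a ha b hb hab
      exact hab
    · intro k hk
      rw [Finset.mem_coe, Finset.mem_filter] at hk
      refine ⟨k, ?_, rfl⟩
      rw [Finset.mem_coe, Finset.mem_filter]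
      exact ⟨hk.1, (hfract k hk.1).symm ▸ hk.2⟩
  have hcount := residue_count p hp2
  rw [← hcardeq] at hcount
  set C := ((Finset.Icc 1 (p-1)).filter (fun k : ℕ =>
        Int.fract ((j * k : ℝ) / p) ∈
          Set.Icc (1/8 : ℝ) (3/8) ∪ Set.Icc (5/8 : ℝ) (7/8))).card with hC
  have hcount' : (p:ℝ) ≤ 2 * C + 5 := by exact_mod_cast hcount
  have hp1 : (0:ℝ) < (p:ℝ) - 1 := by
    have : (2:ℝ) ≤ p := by exact_mod_cast hp2
    linarith
  constructor
  · rw [ge_iff_le, le_div_iff₀ hp1]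
    have hexp : (((p:ℝ)-1)/2/((p:ℝ)-1) - 2/((p:ℝ)-1)) * ((p:ℝ)-1) = ((p:ℝ)-1)/2 - 2 := by
      field_simp
    rw [hexp]
    linarith
  · intro hp9
    -- the cos filter contains the fract filter
    have hsubset : (Finset.Icc 1 (p-1)).filter (fun k : ℕ =>
        Int.fract ((j * k : ℝ) / p) ∈
          Set.Icc (1/8 : ℝ) (3/8) ∪ Set.Icc (5/8 : ℝ) (7/8))
        ⊆ (Finset.Icc 1 (p-1)).filter (fun k : ℕ =>
          Real.cos (2 * π * j * k / p) ^ 2 ≤ 1/2) := by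
      intro k hk
      rw [Finset.mem_filter] at hk ⊢
      refine ⟨hk.1, ?_⟩
      have heq : 2 * π * (j:ℝ) * k / p = 2 * π * ((j:ℝ) * k / p) := by ring
      rw [heq]
      exact cos_sq_le_half' hk.2
    have hle := Finset.card_le_card hsubset
    have hle' : (C:ℝ) ≤ (((Finset.Icc 1 (p-1)).filter (fun k : ℕ =>
          Real.cos (2 * π * j * k / p) ^ 2 ≤ 1/2)).card : ℝ) := by
      have hle2 : C ≤ ((Finset.Icc 1 (p-1)).filter (fun k : ℕ =>
          Real.cos (2 * π * j * k / p) ^ 2 ≤ 1/2)).card := by rw [hC]; exact hle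
      exact_mod_cast hle2
    have hp9' : (9:ℝ) ≤ p := by exact_mod_cast hp9
    rw [ge_iff_le, le_div_iff₀ hp1]
    linarith
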